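/- The limit set L has one-dimensional Lebesgue measure zero; consequently, for Lebesgue-almost every x ∈ ℝ the limit of |F_ψ(x) − F_ψ(η)|/|x − η|^α as η → x exists and equals 0 (so F_ψ is an ordinary devil's staircase and dim_H({x ∈ ℝ : this limit is 0}) = 1). -/

import Mathlib

open Set Filter MeasureTheory Topology
open scoped ENNReal NNReal

noncomputable section

/-- A conformal iterated function system on a compact interval `X = [x₀, x₁] ⊂ ℝ`:
finitely many (`d + 1`, with `d ≥ 1`) differentiable contractions mapping `X` into its
interior, satisfying the Hölder condition (each `f a` extends to a `C^{1+ε}`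
diffeomorphism of an open interval `Y = (y₀, y₁) ⊃ X` onto its image, with `f a '' Y ⊆ Y`)
and the strong separation condition. -/
structure CIFS where
  d : ℕ
  one_le_d : 1 ≤ d
  x₀ : ℝ
  x₁ : ℝ
  x_lt : x₀ < x₁
  y₀ : ℝ
  y₁ : ℝ
  y₀_lt : y₀ < x₀
  y₁_gt : x₁ < y₁
  f : Fin (d + 1) → ℝ → ℝ
  maps_X : ∀ a, MapsTo (f a) (Icc x₀ x₁) (Ioo x₀ x₁)
  r : ℝ
  r_pos : 0 < r
  r_lt_one : r < 1
  contr : ∀ a, ∀ u ∈ Icc x₀ x₁, ∀ v ∈ Icc x₀ x₁, |f a u - f a v| ≤ r * |u - v|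
  maps_Y : ∀ a, MapsTo (f a) (Ioo y₀ y₁) (Ioo y₀ y₁)
  injOn_Y : ∀ a, InjOn (f a) (Ioo y₀ y₁)
  diff_Y : ∀ a, ∀ x ∈ Ioo y₀ y₁, DifferentiableAt ℝ (f a) x
  deriv_ne : ∀ a, ∀ x ∈ Ioo y₀ y₁, deriv (f a) x ≠ 0
  ε : NNReal
  ε_pos : 0 < ε
  ε_le_one : ε ≤ 1
  hc : NNReal
  holder : ∀ a, HolderOnWith hc ε (deriv (f a)) (Ioo y₀ y₁)
  sep : ∀ a b, a ≠ b → Disjoint (f a '' Icc x₀ x₁) (f b '' Icc x₀ x₁)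

namespace CIFS

/-- the compact interval `X`. -/
def X (S : CIFS) : Set ℝ := Icc S.x₀ S.x₁

/-- `fw ω = f_{x₁} ∘ ⋯ ∘ f_{x_n}` for the word `ω = x₁…x_n`. -/
def fw (S : CIFS) : List (Fin (S.d + 1)) → ℝ → ℝ
  | [] => id
  | a :: ω => S.f a ∘ fw S ω

/-- the limit set `L = ⋂ n ⋃_{|ω| = n} f_ω(X)`. -/
def L (S : CIFS) : Set ℝ :=
  ⋂ n : ℕ, ⋃ ω ∈ {ω : List (Fin (S.d + 1)) | ω.length = n}, S.fw ω '' S.X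

/-- the initial word `x₁…x_n` of a code `x = (x₁x₂…)` (here `x j` is the letter `x_{j+1}`). -/
def code (S : CIFS) (x : ℕ → Fin (S.d + 1)) (n : ℕ) : List (Fin (S.d + 1)) :=
  (List.range n).map x

/-- the coding map `Φ`: sends a code `x` to the unique point of `⋂ n, f_{x₁…x_n}(X)`
(this intersection is a singleton, so we may take its supremum). -/
def Φ (S : CIFS) (x : ℕ → Fin (S.d + 1)) : ℝ :=
  sSup (⋂ n : ℕ, S.fw (S.code x n) '' S.X)

/-- the cylinder set `[ω] ⊆ L` of a word `ω`. -/
def cyl (S : CIFS) (ω : List (Fin (S.d + 1))) : Set ℝ :=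
  S.Φ '' {x | S.code x ω.length = ω}

/-- the left shift on code space. -/
def shift (S : CIFS) (x : ℕ → Fin (S.d + 1)) : ℕ → Fin (S.d + 1) := fun n => x (n + 1)

/-- the Birkhoff sum `S_n g (ξ)` of `g : L → ℝ` evaluated at the point `ξ` with code `x`. -/
def birk (S : CIFS) (g : ℝ → ℝ) (n : ℕ) (x : ℕ → Fin (S.d + 1)) : ℝ :=
  ∑ k ∈ Finset.range n, g (S.Φ fun j => x (j + k))

/-- the code of a point of `L` (a choice of inverse of the coding map `Φ`). -/
def codeOf (S : CIFS) (ξ : ℝ) : ℕ → Fin (S.d + 1) := Function.invFun S.Φ ξ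

/-- the geometric potential `φ(ξ) = log |f'_{x₁}(Φ(σξ))|` for `ξ = (x₁x₂…) ∈ L`. -/
def geom (S : CIFS) : ℝ → ℝ := fun ξ =>
  Real.log |deriv (S.f (S.codeOf ξ 0)) (S.Φ (S.shift (S.codeOf ξ)))|

/-- the `n`-th approximant `(1/n) log Σ_{|ω| = n} exp (sup_{ξ ∈ [ω]} S_n g(ξ))`
of the topological pressure. -/
def presSeq (S : CIFS) (g : ℝ → ℝ) (n : ℕ) : ℝ :=
  Real.log (∑ ω : Fin n → Fin (S.d + 1),
      Real.exp (sSup (S.birk g n '' {x : ℕ → Fin (S.d + 1) | ∀ i : Fin n, x i.1 = ω i}))) / n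

/-- `P(g) = p` : the defining limit of the topological pressure exists and equals `p`. -/
def HasPressure (S : CIFS) (g : ℝ → ℝ) (p : ℝ) : Prop :=
  Tendsto (S.presSeq g) atTop (nhds p)

/-- Hölder continuity on the limit set. -/
def HolderOn (S : CIFS) (g : ℝ → ℝ) : Prop :=
  ∃ c e : NNReal, 0 < e ∧ HolderOnWith c e g S.L

/-- the standing assumptions on the potential `ψ` (for the exponent `α`):
`ψ` is Hölder continuous, `ψ < 0`, `P(ψ) = 0` and `ψ > αφ` on `L`. -/
def GoodPotential (S : CIFS) (α : ℝ) (ψ : ℝ → ℝ) : Prop :=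
  S.HolderOn ψ ∧ (∀ ξ ∈ S.L, ψ ξ < 0) ∧ S.HasPressure ψ 0 ∧
    ∀ ξ ∈ S.L, α * S.geom ξ < ψ ξ

/-- the Gibbs property of the measure `ν` for the potential `ψ`. -/
def IsGibbs (S : CIFS) (ψ : ℝ → ℝ) (ν : Measure ℝ) : Prop :=
  ∃ c : ℝ, 1 ≤ c ∧ ∀ n : ℕ, ∀ x : ℕ → Fin (S.d + 1),
    c⁻¹ * Real.exp (S.birk ψ n x) ≤ (ν (S.cyl (S.code x n))).toReal ∧
      (ν (S.cyl (S.code x n))).toReal ≤ c * Real.exp (S.birk ψ n x)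

/-- the set `E` of codes which are eventually constant equal to `0` or to `1`;
`L* = L \ Φ(E)`. -/
def Ecode (S : CIFS) : Set (ℕ → Fin (S.d + 1)) :=
  {x | ∃ i : Fin (S.d + 1), (i = 0 ∨ i = 1) ∧ ∃ n : ℕ, ∀ k ≥ n, x k = i}

/-- the code `x` has an `i`-block of length `k` at the `n`-th level:
`x_n ≠ i`, `x_{n+k+1} ≠ i` and `x_{n+m} = i` for `1 ≤ m ≤ k`
(recall `x j` is the letter `x_{j+1}`). -/
def HasBlock (S : CIFS) (x : ℕ → Fin (S.d + 1)) (i : Fin (S.d + 1)) (k n : ℕ) : Prop :=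
  x (n - 1) ≠ i ∧ x (n + k) ≠ i ∧ ∀ m : ℕ, 1 ≤ m → m ≤ k → x (n + m - 1) = i

/-- the labelling convention: `f 0 (X)` is the leftmost and `f 1 (X)` the rightmost
interval of the first level. -/
def Labeled (S : CIFS) : Prop :=
  (∀ a : Fin (S.d + 1), a ≠ 0 → ∀ u ∈ S.f 0 '' S.X, ∀ v ∈ S.f a '' S.X, u < v) ∧
  (∀ a : Fin (S.d + 1), a ≠ 1 → ∀ u ∈ S.f 1 '' S.X, ∀ v ∈ S.f a '' S.X, v < u)

end CIFS

namespace CIFS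

variable (S : CIFS)

lemma X_nonempty : S.X.Nonempty := ⟨S.x₀, le_refl _, S.x_lt.le⟩

lemma isCompact_X : IsCompact S.X := isCompact_Icc

lemma X_subset_Y : S.X ⊆ Ioo S.y₀ S.y₁ := fun x hx =>
  ⟨S.y₀_lt.trans_le hx.1, lt_of_le_of_lt hx.2 S.y₁_gt⟩

lemma mapsTo_f (a : Fin (S.d + 1)) : MapsTo (S.f a) S.X S.X := fun x hx =>
  Ioo_subset_Icc_self (S.maps_X a hx)

lemma fw_mapsTo : ∀ ω, MapsTo (S.fw ω) S.X S.X
  | [] => fun x hx => hx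
  | a :: ω => fun x hx => S.mapsTo_f a (fw_mapsTo ω hx)

lemma fw_mapsTo_Y : ∀ ω, MapsTo (S.fw ω) (Ioo S.y₀ S.y₁) (Ioo S.y₀ S.y₁)
  | [] => fun x hx => hx
  | a :: ω => fun x hx => S.maps_Y a (fw_mapsTo_Y ω hx)

lemma fw_diff : ∀ ω, ∀ x ∈ Ioo S.y₀ S.y₁, DifferentiableAt ℝ (S.fw ω) x
  | [] => fun _ _ => differentiableAt_id
  | a :: ω => fun x hx =>
      (S.diff_Y a _ (S.fw_mapsTo_Y ω hx)).comp x (fw_diff ω x hx)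

lemma deriv_fw_cons (a : Fin (S.d + 1)) (ω : List (Fin (S.d + 1))) {x : ℝ}
    (hx : x ∈ Ioo S.y₀ S.y₁) :
    deriv (S.fw (a :: ω)) x = deriv (S.f a) (S.fw ω x) * deriv (S.fw ω) x :=
  deriv_comp x (S.diff_Y a _ (S.fw_mapsTo_Y ω hx)) (S.fw_diff ω x hx)

lemma deriv_fw_ne : ∀ ω, ∀ x ∈ Ioo S.y₀ S.y₁, deriv (S.fw ω) x ≠ 0
  | [] => fun x _ => by simp [fw]
  | a :: ω => fun x hx => by
      rw [S.deriv_fw_cons a ω hx]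
      exact mul_ne_zero (S.deriv_ne a _ (S.fw_mapsTo_Y ω hx)) (deriv_fw_ne ω x hx)

lemma fw_contr : ∀ ω, ∀ u ∈ S.X, ∀ v ∈ S.X,
    |S.fw ω u - S.fw ω v| ≤ S.r ^ ω.length * |u - v|
  | [] => by intro u _ v _; simp [fw]
  | a :: ω => by
      intro u hu v hv
      have h1 : |S.f a (S.fw ω u) - S.f a (S.fw ω v)| ≤ S.r * |S.fw ω u - S.fw ω v| :=
        S.contr a _ (S.fw_mapsTo ω hu) _ (S.fw_mapsTo ω hv)
      have h2 : S.r * |S.fw ω u - S.fw ω v| ≤ S.r * (S.r ^ ω.length * |u - v|) :=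
        mul_le_mul_of_nonneg_left (fw_contr ω u hu v hv) S.r_pos.le
      calc |S.fw (a :: ω) u - S.fw (a :: ω) v| ≤ S.r * (S.r ^ ω.length * |u - v|) :=
            le_trans h1 h2
        _ = S.r ^ (a :: ω).length * |u - v| := by
            rw [List.length_cons, pow_succ]; ring

lemma fw_injOn : ∀ ω, InjOn (S.fw ω) S.X
  | [] => fun _ _ _ _ h => h
  | a :: ω => fun u hu v hv h => fw_injOn ω hu hv
      ((S.injOn_Y a) (S.X_subset_Y (S.fw_mapsTo ω hu)) (S.X_subset_Y (S.fw_mapsTo ω hv)) h)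

lemma fw_continuousOn (ω : List (Fin (S.d + 1))) : ContinuousOn (S.fw ω) S.X := fun x hx =>
  (S.fw_diff ω x (S.X_subset_Y hx)).continuousAt.continuousWithinAt

lemma isCompact_fw_image (ω : List (Fin (S.d + 1))) : IsCompact (S.fw ω '' S.X) :=
  S.isCompact_X.image_of_continuousOn (S.fw_continuousOn ω)

lemma fw_append_singleton (a : Fin (S.d + 1)) :
    ∀ ω : List (Fin (S.d + 1)), S.fw (ω ++ [a]) = S.fw ω ∘ S.f a
  | [] => rfl
  | b :: ω => by
      show S.f b ∘ S.fw (ω ++ [a]) = (S.f b ∘ S.fw ω) ∘ S.f a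
      rw [fw_append_singleton a ω]
      rfl

lemma fw_disjoint : ∀ ω ω' : List (Fin (S.d + 1)), ω.length = ω'.length → ω ≠ ω' →
    Disjoint (S.fw ω '' S.X) (S.fw ω' '' S.X)
  | [], [], _, hne => absurd rfl hne
  | [], _ :: _, hlen, _ => by simp at hlen
  | _ :: _, [], hlen, _ => by simp at hlen
  | a :: t, b :: t', hlen, hne => by
      have himg : ∀ c : Fin (S.d + 1), ∀ s : List (Fin (S.d + 1)),
          S.fw (c :: s) '' S.X = S.f c '' (S.fw s '' S.X) := by
        intro c s; rw [← image_comp]; rfl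
      by_cases hab : a = b
      · subst hab
        have ht : t ≠ t' := fun h => hne (by rw [h])
        have hd := fw_disjoint t t' (by simpa using hlen) ht
        rw [himg, himg]
        apply Set.disjoint_image_image
        intro x hx y hy hxy
        have hx' : x ∈ S.X := image_subset_iff.2 (S.fw_mapsTo t) hx
        have hy' : y ∈ S.X := image_subset_iff.2 (S.fw_mapsTo t') hy
        have : x = y := (S.injOn_Y a) (S.X_subset_Y hx') (S.X_subset_Y hy') hxy
        exact Set.disjoint_left.1 hd hx (this ▸ hy)
      · rw [himg, himg]
        refine (S.sep a b hab).mono ?_ ?_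
        · exact image_mono (image_subset_iff.2 (S.fw_mapsTo t))
        · exact image_mono (image_subset_iff.2 (S.fw_mapsTo t'))

end CIFS


section Helpers

lemma abs_log_sub_log_le' {m p q : ℝ} (hm : 0 < m) (hp : m ≤ p) (hq : m ≤ q) :
    |Real.log p - Real.log q| ≤ |p - q| / m := by
  wlog h : q ≤ p generalizing p q
  · rw [abs_sub_comm, abs_sub_comm p q]; exact this hq hp (le_of_not_ge h)
  have hq0 : 0 < q := hm.trans_le hq
  have hp0 : 0 < p := hm.trans_le hp
  have hlog : Real.log q ≤ Real.log p := (Real.log_le_log_iff hq0 hp0).2 h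
  rw [abs_of_nonneg (sub_nonneg.2 hlog), abs_of_nonneg (sub_nonneg.2 h)]
  have h1 : Real.log p - Real.log q = Real.log (p / q) := (Real.log_div hp0.ne' hq0.ne').symm
  have h2 : Real.log (p / q) ≤ p / q - 1 := Real.log_le_sub_one_of_pos (div_pos hp0 hq0)
  have h3 : p / q - 1 = (p - q) / q := by field_simp
  have h4 : (p - q) / q ≤ (p - q) / m :=
    div_le_div_of_nonneg_left (sub_nonneg.2 h) hm hq
  linarith

lemma holder_abs_le {C e : ℝ≥0} {g : ℝ → ℝ} {s : Set ℝ} (h : HolderOnWith C e g s)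
    {u v : ℝ} (hu : u ∈ s) (hv : v ∈ s) : |g u - g v| ≤ C * |u - v| ^ (e : ℝ) := by
  have h1 := h.edist_le hu hv
  rw [edist_dist, edist_dist] at h1
  have h2 : (ENNReal.ofReal (dist u v)) ^ (e : ℝ) = ENNReal.ofReal (dist u v ^ (e : ℝ)) :=
    ENNReal.ofReal_rpow_of_nonneg dist_nonneg e.coe_nonneg
  rw [h2, ← ENNReal.ofReal_coe_nnreal, ← ENNReal.ofReal_mul C.coe_nonneg] at h1
  have h3 : dist (g u) (g v) ≤ (C : ℝ) * dist u v ^ (e : ℝ) :=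
    (ENNReal.ofReal_le_ofReal_iff (by positivity)).1 h1
  simpa [Real.dist_eq] using h3

lemma vol_image_le' {g : ℝ → ℝ} {s : Set ℝ} {K : ℝ} (hK : 0 ≤ K)
    (h : ∀ u ∈ s, ∀ v ∈ s, |g u - g v| ≤ K * |u - v|) :
    volume (g '' s) ≤ ENNReal.ofReal K * volume s := by
  have hl : LipschitzOnWith (Real.toNNReal K) g s := by
    apply LipschitzOnWith.of_dist_le_mul
    intro u hu v hv
    rw [Real.dist_eq, Real.dist_eq, Real.coe_toNNReal K hK]
    exact h u hu v hv
  have h1 := hl.hausdorffMeasure_image_le (d := 1) zero_le_one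
  rw [MeasureTheory.hausdorffMeasure_real, ENNReal.rpow_one] at h1
  exact h1

lemma vol_le_image' {g : ℝ → ℝ} {s t : Set ℝ} (hts : t ⊆ s) {K : ℝ} (hK : 0 < K)
    (h : ∀ u ∈ s, ∀ v ∈ s, K * |u - v| ≤ |g u - g v|) :
    ENNReal.ofReal K * volume t ≤ volume (g '' t) := by
  have hinj : InjOn g s := by
    intro u hu v hv huv
    have := h u hu v hv
    rw [huv, sub_self, abs_zero] at this
    have h0 : |u - v| ≤ 0 := nonpos_of_mul_nonpos_right (this.trans (le_refl 0)) hK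
    have h1 : |u - v| = 0 := le_antisymm h0 (abs_nonneg _)
    exact sub_eq_zero.1 (abs_eq_zero.1 h1)
  set g' := Function.invFunOn g s with hg'
  have hback : ∀ u ∈ s, g' (g u) = u := fun u hu =>
    hinj (Function.invFunOn_apply_mem hu) hu (Function.invFunOn_apply_eq hu)
  have himg : g' '' (g '' t) = t := by
    rw [← image_comp]
    apply Set.EqOn.image_eq_self
    intro u hu
    exact hback u (hts hu)
  have hbound : ∀ p ∈ g '' t, ∀ q ∈ g '' t, |g' p - g' q| ≤ K⁻¹ * |p - q| := by
    rintro p ⟨u, hu, rfl⟩ q ⟨v, hv, rfl⟩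
    rw [hback u (hts hu), hback v (hts hv)]
    have h1 := h u (hts hu) v (hts hv)
    rw [inv_mul_eq_div, le_div_iff₀ hK, mul_comm]
    exact h1
  have h2 : volume t ≤ ENNReal.ofReal K⁻¹ * volume (g '' t) := by
    calc volume t = volume (g' '' (g '' t)) := by rw [himg]
      _ ≤ ENNReal.ofReal K⁻¹ * volume (g '' t) :=
        vol_image_le' (inv_nonneg.2 hK.le) hbound
  calc ENNReal.ofReal K * volume t ≤ ENNReal.ofReal K * (ENNReal.ofReal K⁻¹ * volume (g '' t)) :=
        mul_le_mul_right h2 _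
    _ = (ENNReal.ofReal K * ENNReal.ofReal K⁻¹) * volume (g '' t) := by rw [mul_assoc]
    _ = volume (g '' t) := by
        rw [← ENNReal.ofReal_mul hK.le, mul_inv_cancel₀ hK.ne', ENNReal.ofReal_one, one_mul]

end Helpers


namespace CIFS

variable (S : CIFS)

lemma f_deriv_lb : ∃ m : ℝ, 0 < m ∧ ∀ a, ∀ x ∈ S.X, m ≤ |deriv (S.f a) x| := by
  have key : ∀ a : Fin (S.d + 1), ∃ m : ℝ, 0 < m ∧ ∀ x ∈ S.X, m ≤ |deriv (S.f a) x| := by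
    intro a
    have hcont : ContinuousOn (fun x => |deriv (S.f a) x|) S.X :=
      (((S.holder a).continuousOn S.ε_pos).mono S.X_subset_Y).abs
    obtain ⟨z, hz, hmin⟩ := S.isCompact_X.exists_isMinOn S.X_nonempty hcont
    exact ⟨_, abs_pos.2 (S.deriv_ne a z (S.X_subset_Y hz)), fun x hx => hmin hx⟩
  choose m hm using key
  refine ⟨Finset.univ.inf' Finset.univ_nonempty m, ?_, fun a x hx => ?_⟩
  · rw [Finset.lt_inf'_iff]
    exact fun a _ => (hm a).1
  · exact le_trans (Finset.inf'_le m (Finset.mem_univ a)) ((hm a).2 x hx)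

lemma distortion : ∃ D : ℝ, 0 ≤ D ∧ ∀ ω : List (Fin (S.d + 1)), ∀ u ∈ S.X, ∀ v ∈ S.X,
    |deriv (S.fw ω) u| ≤ Real.exp D * |deriv (S.fw ω) v| := by
  obtain ⟨m, hm0, hm⟩ := S.f_deriv_lb
  set e : ℝ := (S.ε : ℝ) with he
  have he0 : 0 < e := S.ε_pos
  set q : ℝ := S.r ^ e with hq
  have hq0 : 0 ≤ q := Real.rpow_nonneg S.r_pos.le e
  have hq1 : q < 1 := Real.rpow_lt_one S.r_pos.le S.r_lt_one he0
  set B : ℝ := (S.x₁ - S.x₀) ^ e with hB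
  have hB0 : 0 ≤ B := Real.rpow_nonneg (sub_nonneg.2 S.x_lt.le) e
  set C₀ : ℝ := (S.hc : ℝ) / m with hC₀
  have hC₀0 : 0 ≤ C₀ := div_nonneg S.hc.coe_nonneg hm0.le
  have hsingle : ∀ a : Fin (S.d + 1), ∀ p ∈ S.X, ∀ p' ∈ S.X,
      abs (Real.log |deriv (S.f a) p| - Real.log |deriv (S.f a) p'|) ≤ C₀ * |p - p'| ^ e := by
    intro a p hp p' hp'
    have h1 : abs (Real.log |deriv (S.f a) p| - Real.log |deriv (S.f a) p'|) ≤
        abs (|deriv (S.f a) p| - |deriv (S.f a) p'|) / m :=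
      abs_log_sub_log_le' hm0 (hm a p hp) (hm a p' hp')
    have h2 : abs (|deriv (S.f a) p| - |deriv (S.f a) p'|) ≤ |deriv (S.f a) p - deriv (S.f a) p'| :=
      abs_abs_sub_abs_le_abs_sub _ _
    have h3 : |deriv (S.f a) p - deriv (S.f a) p'| ≤ (S.hc : ℝ) * |p - p'| ^ e :=
      holder_abs_le (S.holder a) (S.X_subset_Y hp) (S.X_subset_Y hp')
    have h4 : abs (|deriv (S.f a) p| - |deriv (S.f a) p'|) / m ≤
        ((S.hc : ℝ) * |p - p'| ^ e) / m := by
      gcongr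
      exact le_trans h2 h3
    have h5 : ((S.hc : ℝ) * |p - p'| ^ e) / m = C₀ * |p - p'| ^ e := by
      rw [hC₀]; ring
    linarith
  have claim : ∀ ω : List (Fin (S.d + 1)), ∀ u ∈ S.X, ∀ v ∈ S.X,
      abs (Real.log |deriv (S.fw ω) u| - Real.log |deriv (S.fw ω) v|) ≤
        C₀ * B * ∑ k ∈ Finset.range ω.length, q ^ k := by
    intro ω
    induction ω with
    | nil => intro u _ v _; simp [CIFS.fw]
    | cons a t ih =>
      intro u hu v hv
      have hyu := S.X_subset_Y hu
      have hyv := S.X_subset_Y hv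
      have hpu : S.fw t u ∈ S.X := S.fw_mapsTo t hu
      have hpv : S.fw t v ∈ S.X := S.fw_mapsTo t hv
      have hlogu : Real.log |deriv (S.fw (a :: t)) u| =
          Real.log |deriv (S.f a) (S.fw t u)| + Real.log |deriv (S.fw t) u| := by
        rw [S.deriv_fw_cons a t hyu, abs_mul,
          Real.log_mul (abs_ne_zero.2 (S.deriv_ne a _ (S.X_subset_Y hpu)))
            (abs_ne_zero.2 (S.deriv_fw_ne t u hyu))]
      have hlogv : Real.log |deriv (S.fw (a :: t)) v| =
          Real.log |deriv (S.f a) (S.fw t v)| + Real.log |deriv (S.fw t) v| := by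
        rw [S.deriv_fw_cons a t hyv, abs_mul,
          Real.log_mul (abs_ne_zero.2 (S.deriv_ne a _ (S.X_subset_Y hpv)))
            (abs_ne_zero.2 (S.deriv_fw_ne t v hyv))]
      have htriangle : abs (Real.log |deriv (S.fw (a :: t)) u| - Real.log |deriv (S.fw (a :: t)) v|) ≤
          abs (Real.log |deriv (S.f a) (S.fw t u)| - Real.log |deriv (S.f a) (S.fw t v)|) +
          abs (Real.log |deriv (S.fw t) u| - Real.log |deriv (S.fw t) v|) := by
        rw [hlogu, hlogv]
        have : Real.log |deriv (S.f a) (S.fw t u)| + Real.log |deriv (S.fw t) u| -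
            (Real.log |deriv (S.f a) (S.fw t v)| + Real.log |deriv (S.fw t) v|) =
            (Real.log |deriv (S.f a) (S.fw t u)| - Real.log |deriv (S.f a) (S.fw t v)|) +
            (Real.log |deriv (S.fw t) u| - Real.log |deriv (S.fw t) v|) := by ring
        rw [this]
        exact abs_add_le _ _
      have hdiff : |S.fw t u - S.fw t v| ≤ S.r ^ t.length * (S.x₁ - S.x₀) := by
        have h1 := S.fw_contr t u hu v hv
        have h2 : |u - v| ≤ S.x₁ - S.x₀ := by
          rw [abs_le]
          constructor <;> [linarith [hu.1, hv.2]; linarith [hu.2, hv.1]]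
        calc |S.fw t u - S.fw t v| ≤ S.r ^ t.length * |u - v| := h1
          _ ≤ S.r ^ t.length * (S.x₁ - S.x₀) :=
            mul_le_mul_of_nonneg_left h2 (pow_nonneg S.r_pos.le _)
      have hrpow : |S.fw t u - S.fw t v| ^ e ≤ q ^ t.length * B := by
        have h1 : |S.fw t u - S.fw t v| ^ e ≤ (S.r ^ t.length * (S.x₁ - S.x₀)) ^ e :=
          Real.rpow_le_rpow (abs_nonneg _) hdiff he0.le
        have h2 : (S.r ^ t.length * (S.x₁ - S.x₀)) ^ e =
            (S.r ^ t.length) ^ e * (S.x₁ - S.x₀) ^ e :=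
          Real.mul_rpow (pow_nonneg S.r_pos.le _) (sub_nonneg.2 S.x_lt.le)
        have h3 : (S.r ^ t.length : ℝ) ^ e = q ^ t.length := by
          rw [← Real.rpow_natCast S.r t.length, ← Real.rpow_mul S.r_pos.le, mul_comm,
            Real.rpow_mul S.r_pos.le, Real.rpow_natCast]
        rw [h2, h3] at h1
        exact h1
      have hA : abs (Real.log |deriv (S.f a) (S.fw t u)| - Real.log |deriv (S.f a) (S.fw t v)|) ≤
          C₀ * (q ^ t.length * B) := by
        refine le_trans (hsingle a _ hpu _ hpv) ?_
        exact mul_le_mul_of_nonneg_left hrpow hC₀0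
      have hG := ih u hu v hv
      have hsum : ∑ k ∈ Finset.range (a :: t).length, q ^ k =
          ∑ k ∈ Finset.range t.length, q ^ k + q ^ t.length := by
        rw [List.length_cons, Finset.sum_range_succ]
      calc abs (Real.log |deriv (S.fw (a :: t)) u| - Real.log |deriv (S.fw (a :: t)) v|)
          ≤ C₀ * (q ^ t.length * B) + C₀ * B * ∑ k ∈ Finset.range t.length, q ^ k := by
            refine le_trans htriangle ?_
            exact add_le_add hA hG
        _ = C₀ * B * ∑ k ∈ Finset.range (a :: t).length, q ^ k := by
            rw [hsum]; ring
  have hsumle : ∀ n : ℕ, ∑ k ∈ Finset.range n, q ^ k ≤ (1 - q)⁻¹ := by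
    intro n
    have h1 : ∑ k ∈ Finset.range n, q ^ k ≤ ∑' k : ℕ, q ^ k :=
      Summable.sum_le_tsum (Finset.range n) (fun i _ => pow_nonneg hq0 i)
        (summable_geometric_of_lt_one hq0 hq1)
    rwa [tsum_geometric_of_lt_one hq0 hq1] at h1
  refine ⟨C₀ * B * (1 - q)⁻¹, mul_nonneg (mul_nonneg hC₀0 hB0) (inv_nonneg.2 (by linarith)), fun ω u hu v hv => ?_⟩
  have hu0 : 0 < |deriv (S.fw ω) u| := abs_pos.2 (S.deriv_fw_ne ω u (S.X_subset_Y hu))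
  have hv0 : 0 < |deriv (S.fw ω) v| := abs_pos.2 (S.deriv_fw_ne ω v (S.X_subset_Y hv))
  have hD : abs (Real.log |deriv (S.fw ω) u| - Real.log |deriv (S.fw ω) v|) ≤
      C₀ * B * (1 - q)⁻¹ := by
    refine le_trans (claim ω u hu v hv) ?_
    exact mul_le_mul_of_nonneg_left (hsumle ω.length) (mul_nonneg hC₀0 hB0)
  have hle : Real.log |deriv (S.fw ω) u| ≤ C₀ * B * (1 - q)⁻¹ + Real.log |deriv (S.fw ω) v| := by
    have := (abs_le.1 hD).2
    linarith
  calc |deriv (S.fw ω) u| = Real.exp (Real.log |deriv (S.fw ω) u|) := (Real.exp_log hu0).symm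
    _ ≤ Real.exp (C₀ * B * (1 - q)⁻¹ + Real.log |deriv (S.fw ω) v|) := Real.exp_le_exp.2 hle
    _ = Real.exp (C₀ * B * (1 - q)⁻¹) * |deriv (S.fw ω) v| := by
        rw [Real.exp_add, Real.exp_log hv0]

lemma fw_mvt (ω : List (Fin (S.d + 1))) {u v : ℝ} (hu : u ∈ S.X) (hv : v ∈ S.X) (huv : u < v) :
    ∃ c ∈ S.X, S.fw ω v - S.fw ω u = deriv (S.fw ω) c * (v - u) := by
  have hsub : Icc u v ⊆ S.X := Icc_subset_Icc hu.1 hv.2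
  have hcont : ContinuousOn (S.fw ω) (Icc u v) := (S.fw_continuousOn ω).mono hsub
  have hd : ∀ x ∈ Ioo u v, HasDerivAt (S.fw ω) (deriv (S.fw ω) x) x := fun x hx =>
    (S.fw_diff ω x (S.X_subset_Y (hsub (Ioo_subset_Icc_self hx)))).hasDerivAt
  obtain ⟨c, hc, hceq⟩ := exists_hasDerivAt_eq_slope (S.fw ω) _ huv hcont hd
  refine ⟨c, hsub (Ioo_subset_Icc_self hc), ?_⟩
  rw [hceq]
  exact (div_mul_cancel₀ _ (sub_ne_zero.2 huv.ne')).symm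

end CIFS


namespace CIFS

variable (S : CIFS)

/-- auxiliary: the `n`-th level set of the construction. -/
def levSet (S : CIFS) (n : ℕ) : Set ℝ :=
  ⋃ ω ∈ {ω : List (Fin (S.d + 1)) | ω.length = n}, S.fw ω '' S.X

lemma L_eq_iInter_levSet : S.L = ⋂ n : ℕ, S.levSet n := rfl

/-- auxiliary: the finite set of words of length `n`. -/
def wordFinset (S : CIFS) (n : ℕ) : Finset (List (Fin (S.d + 1))) :=
  (Finset.univ : Finset (Fin n → Fin (S.d + 1))).image List.ofFn

lemma mem_wordFinset {n : ℕ} {ω : List (Fin (S.d + 1))} :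
    ω ∈ S.wordFinset n ↔ ω.length = n := by
  simp only [wordFinset, Finset.mem_image, Finset.mem_univ, true_and]
  constructor
  · rintro ⟨v, rfl⟩; exact List.length_ofFn
  · rintro rfl; exact ⟨ω.get, List.ofFn_get ω⟩

lemma levSet_eq (n : ℕ) : S.levSet n = ⋃ ω ∈ S.wordFinset n, S.fw ω '' S.X := by
  rw [levSet, show {ω : List (Fin (S.d + 1)) | ω.length = n} = ↑(S.wordFinset n) from
    Set.ext fun ω => by simp [S.mem_wordFinset], Finset.set_biUnion_coe]

lemma levSet_subset_X (n : ℕ) : S.levSet n ⊆ S.X :=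
  iUnion₂_subset fun ω _ => image_subset_iff.2 (S.fw_mapsTo ω)

lemma L_subset_X : S.L ⊆ S.X :=
  (S.L_eq_iInter_levSet ▸ iInter_subset (fun n => S.levSet n) 0).trans (S.levSet_subset_X 0)

lemma isClosed_levSet (n : ℕ) : IsClosed (S.levSet n) := by
  rw [S.levSet_eq]
  exact Set.Finite.isClosed_biUnion (Finset.finite_toSet _)
    (fun ω _ => (S.isCompact_fw_image ω).isClosed)

lemma isClosed_L : IsClosed S.L := by
  rw [S.L_eq_iInter_levSet]
  exact isClosed_iInter fun n => S.isClosed_levSet n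

lemma volume_X_eq : volume S.X = ENNReal.ofReal (S.x₁ - S.x₀) := by
  rw [show S.X = Icc S.x₀ S.x₁ from rfl, Real.volume_Icc]

lemma volume_X_ne_top : volume S.X ≠ ⊤ := by
  rw [S.volume_X_eq]; exact ENNReal.ofReal_ne_top

lemma volume_levSet_ne_top (n : ℕ) : volume (S.levSet n) ≠ ⊤ :=
  ne_top_of_le_ne_top S.volume_X_ne_top (measure_mono (S.levSet_subset_X n))

lemma volume_L_zero : volume S.L = 0 := by
  obtain ⟨D, hD0, hdist⟩ := S.distortion
  set vX : ℝ := S.x₁ - S.x₀ with hvX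
  have hvX0 : 0 < vX := sub_pos.2 S.x_lt
  set A : Set ℝ := ⋃ a, S.f a '' S.X with hA
  have hAX : A ⊆ S.X := iUnion_subset fun a => image_subset_iff.2 (S.mapsTo_f a)
  have hfcont : ∀ a : Fin (S.d + 1), ContinuousOn (S.f a) S.X := fun a x hx =>
    (S.diff_Y a x (S.X_subset_Y hx)).continuousAt.continuousWithinAt
  have hAcomp : IsCompact A :=
    isCompact_iUnion fun a => S.isCompact_X.image_of_continuousOn (hfcont a)
  have hx0A : S.x₀ ∉ A := by
    intro hx
    obtain ⟨a, u, hu, heq⟩ := by simpa [hA] using hx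
    have h1 := S.maps_X a hu
    rw [heq] at h1
    exact lt_irrefl _ h1.1
  obtain ⟨δ, hδ0, hball⟩ := Metric.isOpen_iff.1 hAcomp.isClosed.isOpen_compl S.x₀ hx0A
  set t : ℝ := min (S.x₀ + δ) S.x₁ with ht
  have htx0 : S.x₀ < t := lt_min (by linarith) S.x_lt
  have hIoo : Ioo S.x₀ t ⊆ S.X \ A := by
    intro z hz
    refine ⟨⟨hz.1.le, (hz.2.trans_le (min_le_right _ _)).le⟩, ?_⟩
    apply hball
    rw [Metric.mem_ball, Real.dist_eq, abs_of_pos (sub_pos.2 hz.1)]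
    have h1 := hz.2.trans_le (min_le_left _ _)
    linarith
  have hXAfin : volume (S.X \ A) ≠ ⊤ :=
    ne_top_of_le_ne_top S.volume_X_ne_top (measure_mono diff_subset)
  set gA : ℝ := (volume (S.X \ A)).toReal with hgA
  have hgA0 : 0 < gA := by
    apply ENNReal.toReal_pos _ hXAfin
    have h1 : (0 : ℝ≥0∞) < ENNReal.ofReal (t - S.x₀) := ENNReal.ofReal_pos.2 (sub_pos.2 htx0)
    have h2 : ENNReal.ofReal (t - S.x₀) ≤ volume (S.X \ A) := by
      rw [← Real.volume_Ioo]
      exact measure_mono hIoo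
    exact (h1.trans_le h2).ne'
  have hgAle : gA ≤ vX := by
    have h1 := ENNReal.toReal_mono S.volume_X_ne_top (measure_mono (diff_subset : S.X \ A ⊆ S.X))
    rwa [S.volume_X_eq, ENNReal.toReal_ofReal hvX0.le] at h1
  set θ : ℝ := Real.exp (-(2 * D)) * (gA / vX) with hθ
  have hθ0 : 0 < θ := mul_pos (Real.exp_pos _) (div_pos hgA0 hvX0)
  have hθ1 : θ ≤ 1 := by
    have h1 : Real.exp (-(2 * D)) ≤ 1 := Real.exp_le_one_iff.2 (by linarith)
    have h2 : gA / vX ≤ 1 := (div_le_one hvX0).2 hgAle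
    nlinarith [Real.exp_pos (-(2 * D))]
  have hexp : Real.exp (-(2 * D)) * Real.exp D = Real.exp (-D) := by
    rw [← Real.exp_add]; congr 1; ring
  -- the core estimate for a single word
  have core : ∀ ω : List (Fin (S.d + 1)),
      (volume (S.fw ω '' A)).toReal ≤ (1 - θ) * (volume (S.fw ω '' S.X)).toReal := by
    intro ω
    set F := S.fw ω with hF
    have hp₀ : S.x₀ ∈ S.X := ⟨le_refl _, S.x_lt.le⟩
    set κ : ℝ := |deriv F S.x₀| with hκ
    have hκ0 : 0 < κ := abs_pos.2 (S.deriv_fw_ne ω S.x₀ (S.X_subset_Y hp₀))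
    set Khi : ℝ := Real.exp D * κ with hKhi
    set Klo : ℝ := Real.exp (-D) * κ with hKlo
    have hKhi0 : 0 < Khi := mul_pos (Real.exp_pos _) hκ0
    have hKlo0 : 0 < Klo := mul_pos (Real.exp_pos _) hκ0
    have horder : ∀ u ∈ S.X, ∀ v ∈ S.X, u < v →
        Klo * |u - v| ≤ |F u - F v| ∧ |F u - F v| ≤ Khi * |u - v| := by
      intro u hu v hv huv
      obtain ⟨c, hc, hceq⟩ := S.fw_mvt ω hu hv huv
      have h1 : |F v - F u| = |deriv F c| * (v - u) := by
        rw [hF, hceq, abs_mul, abs_of_pos (sub_pos.2 huv)]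
      have hup : |deriv F c| ≤ Real.exp D * κ := hdist ω c hc S.x₀ hp₀
      have hdn : Real.exp (-D) * κ ≤ |deriv F c| := by
        have h2 : κ ≤ Real.exp D * |deriv F c| := hdist ω S.x₀ hp₀ c hc
        have h3 := mul_le_mul_of_nonneg_left h2 (Real.exp_pos (-D)).le
        rw [← mul_assoc, ← Real.exp_add, neg_add_cancel, Real.exp_zero, one_mul] at h3
        exact h3
      have habs : |u - v| = v - u := by rw [abs_sub_comm, abs_of_pos (sub_pos.2 huv)]
      have habs2 : |F u - F v| = |F v - F u| := abs_sub_comm _ _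
      constructor
      · rw [habs2, h1, habs, hKlo]
        exact mul_le_mul_of_nonneg_right hdn (sub_pos.2 huv).le
      · rw [habs2, h1, habs, hKhi]
        exact mul_le_mul_of_nonneg_right hup (sub_pos.2 huv).le
    have hkey : ∀ u ∈ S.X, ∀ v ∈ S.X,
        Klo * |u - v| ≤ |F u - F v| ∧ |F u - F v| ≤ Khi * |u - v| := by
      intro u hu v hv
      rcases lt_trichotomy u v with h | h | h
      · exact horder u hu v hv h
      · subst h; simp
      · obtain ⟨h1, h2⟩ := horder v hv u hu h
        rw [abs_sub_comm u v, abs_sub_comm (F u) (F v)]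
        exact ⟨h1, h2⟩
    have hFXsub : F '' S.X ⊆ S.X := image_subset_iff.2 (S.fw_mapsTo ω)
    have hFXfin : volume (F '' S.X) ≠ ⊤ :=
      ne_top_of_le_ne_top S.volume_X_ne_top (measure_mono hFXsub)
    have hFAfin : volume (F '' A) ≠ ⊤ :=
      ne_top_of_le_ne_top hFXfin (measure_mono (image_mono hAX))
    have hβfin : volume (F '' S.X \ F '' A) ≠ ⊤ :=
      ne_top_of_le_ne_top hFXfin (measure_mono diff_subset)
    have hInj : InjOn F S.X := S.fw_injOn ω
    have hdiffim : F '' (S.X \ A) = F '' S.X \ F '' A := hInj.image_diff_subset hAX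
    have hFAmeas : NullMeasurableSet (F '' A) volume :=
      (hAcomp.image_of_continuousOn
        ((S.fw_continuousOn ω).mono hAX)).isClosed.measurableSet.nullMeasurableSet
    have hadd : volume (F '' A) + volume (F '' S.X \ F '' A) = volume (F '' S.X) := by
      rw [measure_add_diff hFAmeas (F '' S.X),
        union_eq_self_of_subset_left (image_mono hAX)]
    have hβlo : ENNReal.ofReal (Klo * gA) ≤ volume (F '' S.X \ F '' A) := by
      rw [← hdiffim]
      have h1 := vol_le_image' (diff_subset : S.X \ A ⊆ S.X) hKlo0
        (fun u hu v hv => (hkey u hu v hv).1)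
      calc ENNReal.ofReal (Klo * gA) = ENNReal.ofReal Klo * volume (S.X \ A) := by
            rw [ENNReal.ofReal_mul hKlo0.le, hgA, ENNReal.ofReal_toReal hXAfin]
        _ ≤ volume (F '' (S.X \ A)) := h1
    have hγhi : volume (F '' S.X) ≤ ENNReal.ofReal (Khi * vX) := by
      have h1 := vol_image_le' hKhi0.le (fun u hu v hv => (hkey u hu v hv).2)
      calc volume (F '' S.X) ≤ ENNReal.ofReal Khi * volume S.X := h1
        _ = ENNReal.ofReal (Khi * vX) := by
            rw [S.volume_X_eq, ← ENNReal.ofReal_mul hKhi0.le]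
    have haddR : (volume (F '' A)).toReal + (volume (F '' S.X \ F '' A)).toReal =
        (volume (F '' S.X)).toReal := by
      rw [← ENNReal.toReal_add hFAfin hβfin, hadd]
    have hβR : Klo * gA ≤ (volume (F '' S.X \ F '' A)).toReal := by
      have h1 := ENNReal.toReal_mono hβfin hβlo
      rwa [ENNReal.toReal_ofReal (mul_nonneg hKlo0.le hgA0.le)] at h1
    have hγR : (volume (F '' S.X)).toReal ≤ Khi * vX := by
      have h1 := ENNReal.toReal_mono ENNReal.ofReal_ne_top hγhi
      rwa [ENNReal.toReal_ofReal (mul_nonneg hKhi0.le hvX0.le)] at h1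
    have hθγ : θ * (volume (F '' S.X)).toReal ≤ (volume (F '' S.X \ F '' A)).toReal := by
      have h1 : θ * (volume (F '' S.X)).toReal ≤ θ * (Khi * vX) :=
        mul_le_mul_of_nonneg_left hγR hθ0.le
      have h2 : θ * (Khi * vX) = Klo * gA := by
        calc θ * (Khi * vX) =
            (Real.exp (-(2 * D)) * Real.exp D) * κ * gA * (vX / vX) := by
              rw [hθ, hKhi]; ring
          _ = Klo * gA := by rw [hexp, div_self hvX0.ne', hKlo]; ring
      linarith
    have hexpand : (1 - θ) * (volume (F '' S.X)).toReal =
        (volume (F '' S.X)).toReal - θ * (volume (F '' S.X)).toReal := by ring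
    linarith
  -- summation over words of a given length
  have hfinW : ∀ n : ℕ, ∀ ω ∈ S.wordFinset n, volume (S.fw ω '' S.X) ≠ ⊤ := fun n ω _ =>
    ne_top_of_le_ne_top S.volume_X_ne_top (measure_mono (image_subset_iff.2 (S.fw_mapsTo ω)))
  have hfinWA : ∀ n : ℕ, ∀ ω ∈ S.wordFinset n, volume (S.fw ω '' A) ≠ ⊤ := fun n ω hω =>
    ne_top_of_le_ne_top (hfinW n ω hω) (measure_mono (image_mono hAX))
  have hsum_eq : ∀ n : ℕ, (volume (S.levSet n)).toReal =
      ∑ ω ∈ S.wordFinset n, (volume (S.fw ω '' S.X)).toReal := by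
    intro n
    rw [S.levSet_eq n, measure_biUnion_finset ?_ ?_]
    · exact ENNReal.toReal_sum (hfinW n)
    · intro ω hω ω' hω' hne
      exact S.fw_disjoint ω ω'
        (by rw [S.mem_wordFinset.1 (Finset.mem_coe.1 hω), S.mem_wordFinset.1 (Finset.mem_coe.1 hω')])
        hne
    · intro ω _
      exact (S.isCompact_fw_image ω).isClosed.measurableSet
  have hcover : ∀ n : ℕ, S.levSet (n + 1) ⊆ ⋃ ω ∈ S.wordFinset n, S.fw ω '' A := by
    intro n z hz
    rw [S.levSet_eq] at hz
    obtain ⟨ω', hω', hzmem⟩ := mem_iUnion₂.1 hz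
    have hlen : ω'.length = n + 1 := S.mem_wordFinset.1 hω'
    have hne : ω' ≠ [] := by
      intro h; rw [h] at hlen; simp at hlen
    have hsplit : ω' = ω'.dropLast ++ [ω'.getLast hne] := (List.dropLast_append_getLast hne).symm
    rw [hsplit, S.fw_append_singleton, Set.image_comp] at hzmem
    apply mem_iUnion₂.2
    refine ⟨ω'.dropLast, S.mem_wordFinset.2 (by rw [List.length_dropLast, hlen]; rfl), ?_⟩
    refine image_mono ?_ hzmem
    intro w hw
    exact mem_iUnion.2 ⟨ω'.getLast hne, hw⟩
  have hrec : ∀ n : ℕ, (volume (S.levSet (n + 1))).toReal ≤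
      (1 - θ) * (volume (S.levSet n)).toReal := by
    intro n
    have h1 : volume (S.levSet (n + 1)) ≤ ∑ ω ∈ S.wordFinset n, volume (S.fw ω '' A) :=
      (measure_mono (hcover n)).trans (measure_biUnion_finset_le _ _)
    have hsumfin : (∑ ω ∈ S.wordFinset n, volume (S.fw ω '' A)) ≠ ⊤ :=
      (ENNReal.sum_lt_top.2 fun ω hω => (hfinWA n ω hω).lt_top).ne
    calc (volume (S.levSet (n + 1))).toReal
        ≤ (∑ ω ∈ S.wordFinset n, volume (S.fw ω '' A)).toReal := ENNReal.toReal_mono hsumfin h1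
      _ = ∑ ω ∈ S.wordFinset n, (volume (S.fw ω '' A)).toReal := ENNReal.toReal_sum (hfinWA n)
      _ ≤ ∑ ω ∈ S.wordFinset n, (1 - θ) * (volume (S.fw ω '' S.X)).toReal :=
          Finset.sum_le_sum fun ω _ => core ω
      _ = (1 - θ) * ∑ ω ∈ S.wordFinset n, (volume (S.fw ω '' S.X)).toReal := by
          rw [Finset.mul_sum]
      _ = (1 - θ) * (volume (S.levSet n)).toReal := by rw [← hsum_eq n]
  have hbase : (volume (S.levSet 0)).toReal ≤ vX := by
    have h1 := ENNReal.toReal_mono S.volume_X_ne_top (measure_mono (S.levSet_subset_X 0))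
    rwa [S.volume_X_eq, ENNReal.toReal_ofReal hvX0.le] at h1
  have hiter : ∀ n : ℕ, (volume (S.levSet n)).toReal ≤ (1 - θ) ^ n * vX := by
    intro n
    induction n with
    | zero => simpa using hbase
    | succ k ih =>
      calc (volume (S.levSet (k + 1))).toReal ≤ (1 - θ) * (volume (S.levSet k)).toReal := hrec k
        _ ≤ (1 - θ) * ((1 - θ) ^ k * vX) := mul_le_mul_of_nonneg_left ih (by linarith)
        _ = (1 - θ) ^ (k + 1) * vX := by ring
  have hL_le : ∀ n : ℕ, volume S.L ≤ ENNReal.ofReal ((1 - θ) ^ n * vX) := by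
    intro n
    have h1 : volume S.L ≤ volume (S.levSet n) := by
      rw [S.L_eq_iInter_levSet]
      exact measure_mono (iInter_subset (fun k => S.levSet k) n)
    have h2 : volume (S.levSet n) = ENNReal.ofReal ((volume (S.levSet n)).toReal) :=
      (ENNReal.ofReal_toReal (S.volume_levSet_ne_top n)).symm
    rw [h2] at h1
    exact h1.trans (ENNReal.ofReal_le_ofReal (hiter n))
  have htend : Tendsto (fun n : ℕ => ENNReal.ofReal ((1 - θ) ^ n * vX)) atTop (nhds 0) := by
    rw [← ENNReal.ofReal_zero]
    apply ENNReal.tendsto_ofReal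
    have h1 := (tendsto_pow_atTop_nhds_zero_of_lt_one (by linarith : (0:ℝ) ≤ 1 - θ)
      (by linarith : (1:ℝ) - θ < 1)).mul_const vX
    simpa using h1
  exact le_antisymm (ge_of_tendsto' htend hL_le) zero_le

end CIFS


/-- the distribution function `F(t) = ν((-∞, t])` of a measure `ν`. -/
def distFun (ν : Measure ℝ) : ℝ → ℝ := fun t => (ν (Iic t)).toReal

/-- the `α`-Hölder difference quotient `|F(ξ) - F(η)| / |ξ - η|^α`. -/
def hquot (F : ℝ → ℝ) (α ξ η : ℝ) : ℝ := |F ξ - F η| / |ξ - η| ^ α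

/-- the `α`-Hölder derivative of `F` at `ξ` exists in `[0,∞]` and equals `ℓ`. -/
def HolderDerivAt (F : ℝ → ℝ) (α ξ : ℝ) (ℓ : ℝ≥0∞) : Prop :=
  Tendsto (fun η => ENNReal.ofReal (hquot F α ξ η)) (nhdsWithin ξ {ξ}ᶜ) (nhds ℓ)

namespace CIFS

variable (S : CIFS)

lemma holderDerivAt_of_not_mem {ν : Measure ℝ} (hsupp : ν S.Lᶜ = 0)
    {α : ℝ} {x : ℝ} (hx : x ∉ S.L) : HolderDerivAt (distFun ν) α x 0 := by
  obtain ⟨δ, hδ0, hball⟩ := Metric.isOpen_iff.1 S.isClosed_L.isOpen_compl x hx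
  have hmono : ∀ u v : ℝ, u ∈ Metric.ball x δ → v ∈ Metric.ball x δ → u ≤ v →
      ν (Iic u) = ν (Iic v) := by
    intro u v hu hv huv
    have hsub : Ioc u v ⊆ S.Lᶜ := by
      intro z hz
      apply hball
      rw [Metric.mem_ball, Real.dist_eq] at hu hv ⊢
      rw [abs_lt] at hu hv ⊢
      constructor
      · linarith [hz.1]
      · linarith [hz.2]
    have h0 : ν (Ioc u v) = 0 := measure_mono_null hsub hsupp
    apply le_antisymm (measure_mono (Iic_subset_Iic.2 huv))
    calc ν (Iic v) = ν (Iic u ∪ Ioc u v) := by rw [Iic_union_Ioc_eq_Iic huv]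
      _ ≤ ν (Iic u) + ν (Ioc u v) := measure_union_le _ _
      _ = ν (Iic u) := by rw [h0, add_zero]
  have hconst : ∀ η ∈ Metric.ball x δ, distFun ν η = distFun ν x := by
    intro η hη
    rcases le_total η x with h | h
    · unfold distFun; rw [hmono η x hη (Metric.mem_ball_self hδ0) h]
    · unfold distFun; rw [hmono x η (Metric.mem_ball_self hδ0) hη h]
  have hev : ∀ᶠ η in nhdsWithin x {x}ᶜ,
      ENNReal.ofReal (hquot (distFun ν) α x η) = 0 := by
    filter_upwards [nhdsWithin_le_nhds (Metric.ball_mem_nhds x hδ0)] with η hη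
    rw [hquot, hconst η hη, sub_self, abs_zero, zero_div, ENNReal.ofReal_zero]
  unfold HolderDerivAt
  exact Tendsto.congr' (Filter.EventuallyEq.symm hev) tendsto_const_nhds

end CIFS

/-- the set `Λ_ψ^α` of points of `L` where the `α`-Hölder derivative of the
distribution function of the Gibbs measure `ν = ν_ψ` does not exist in `[0,∞]`. -/
def CIFS.Lambda (S : CIFS) (ψ : ℝ → ℝ) (α : ℝ) (ν : Measure ℝ) : Set ℝ :=
  {ξ ∈ S.L | ¬∃ ℓ : ℝ≥0∞, HolderDerivAt (distFun ν) α ξ ℓ}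


/-- The limit set is Lebesgue-null; consequently, at Lebesgue-almost every `x ∈ ℝ` the
`α`-Hölder derivative of `F_ψ` exists and equals `0` (so `F_ψ` is an ordinary devil's
staircase), and `dim_H {x : D^αF_ψ(x) = 0} = 1`. -/
theorem devil_staircase (S : CIFS)
    (α : ℝ) (hα : 0 < α) (ψ : ℝ → ℝ) (hψ : S.GoodPotential α ψ)
    (ν : Measure ℝ) (hprob : IsProbabilityMeasure ν)
    (hsupp : ν S.Lᶜ = 0) (hgibbs : S.IsGibbs ψ ν) :
    volume S.L = 0 ∧
      (∀ᵐ x : ℝ ∂volume, HolderDerivAt (distFun ν) α x 0) ∧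
      dimH {x : ℝ | HolderDerivAt (distFun ν) α x 0} = 1 := by
  have hvol : volume S.L = 0 := S.volume_L_zero
  have hmem : ∀ x ∉ S.L, HolderDerivAt (distFun ν) α x 0 := fun x hx =>
    S.holderDerivAt_of_not_mem hsupp hx
  refine ⟨hvol, ?_, ?_⟩
  · have hsub : {x : ℝ | ¬ HolderDerivAt (distFun ν) α x 0} ⊆ S.L := by
      intro x hx
      by_contra h
      exact hx (hmem x h)
    rw [MeasureTheory.ae_iff]
    exact measure_mono_null hsub hvol
  · apply le_antisymm
    · calc dimH {x : ℝ | HolderDerivAt (distFun ν) α x 0} ≤ dimH (univ : Set ℝ) :=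
            dimH_mono (subset_univ _)
        _ = 1 := by rw [Real.dimH_univ_eq_finrank, Module.finrank_self, Nat.cast_one]
    · have hsub : Iio S.x₀ ⊆ {x : ℝ | HolderDerivAt (distFun ν) α x 0} := by
        intro x hx
        apply hmem
        intro hxL
        exact absurd (S.L_subset_X hxL).1 (not_le.2 hx)
      calc (1 : ℝ≥0∞) = dimH (Iio S.x₀) := by
            rw [Real.dimH_of_nonempty_interior, Module.finrank_self, Nat.cast_one]
            rw [interior_Iio]
            exact ⟨S.x₀ - 1, by simp⟩
        _ ≤ dimH {x : ℝ | HolderDerivAt (distFun ν) α x 0} := dimH_mono hsub
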